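/- Let x, y, z : ℕ → ℤ → F₂ be families of F₂-valued sequences with x̃_i(t) = Σ_{τ=0}^{i-1} x_{i-τ}(t-τ) and ỹ, z̃ defined analogously. Fix integers t, δx, δy, δz and natural numbers i, j, k with i, j, k ≥ 1. Define E(s) = x̃_{i-1}(s-δx+1) + ỹ_j(s-δy-1) + z̃_{k+1}(s-δz) and F(s) = x̃_i(s-δx+1) + ỹ_{j-1}(s-δy) + z̃_{k+1}(s-δz-1). Then E(t-1) + F(t) = x_i(t-δx+1) + ỹ_j(t-δy-2) + ỹ_{j-1}(t-δy). -/
import Mathlib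


/-- Coded symbol `x̃_i(t) = Σ_{τ=0}^{i-1} x_{i-τ}(t-τ)`; in particular `x̃_0(t) = 0`. -/
def tilde (x : ℕ → ℤ → ZMod 2) (i : ℕ) (t : ℤ) : ZMod 2 :=
  ∑ τ ∈ Finset.range i, x (i - τ) (t - (τ : ℤ))

lemma tilde_succ (x : ℕ → ℤ → ZMod 2) (n : ℕ) (s : ℤ) :
    tilde x (n + 1) s = x (n + 1) s + tilde x n (s - 1) := by
  unfold tilde
  rw [Finset.sum_range_succ']
  simp only [Nat.add_sub_cancel, Nat.cast_zero, sub_zero, Nat.cast_add, Nat.cast_one]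
  rw [add_comm]
  congr 1
  apply Finset.sum_congr rfl
  intro τ hτ
  have : n + 1 - (τ + 1) = n - τ := by omega
  rw [this]
  ring_nf

/-- Combining the transmissions `E(t-1)` and `F(t)` of neighbours `E[P]` and `F[P]`. -/
theorem neighbour_sum_EF (x y z : ℕ → ℤ → ZMod 2) (t δx δy δz : ℤ) (i j k : ℕ)
    (hi : 1 ≤ i) (hj : 1 ≤ j) (hk : 1 ≤ k)
    (E F : ℤ → ZMod 2)
    (hE : ∀ s, E s =
      tilde x (i - 1) (s - δx + 1) + tilde y j (s - δy - 1) + tilde z (k + 1) (s - δz))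
    (hF : ∀ s, F s =
      tilde x i (s - δx + 1) + tilde y (j - 1) (s - δy) + tilde z (k + 1) (s - δz - 1)) :
    E (t - 1) + F t =
      x i (t - δx + 1) + tilde y j (t - δy - 2) + tilde y (j - 1) (t - δy) := by
  obtain ⟨n, rfl⟩ := Nat.exists_eq_add_of_le hi
  rw [hE, hF]
  simp only [Nat.add_sub_cancel_left] at *
  have h1 : tilde x (1 + n) (t - δx + 1) = x (1 + n) (t - δx + 1) + tilde x n (t - δx) := by
    rw [add_comm 1 n, tilde_succ]
    ring_nf
  rw [h1]
  have hc : ∀ a : ZMod 2, a + a = 0 := by decide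
  have he1 : t - 1 - δx + 1 = t - δx := by ring
  have he2 : t - 1 - δy - 1 = t - δy - 2 := by ring
  have he3 : t - 1 - δz = t - δz - 1 := by ring
  rw [he1, he2, he3]
  ring_nf
  rw [show (1 + n) = n + 1 from by omega] at *
  abel_nf
  have h2 : ∀ a : ZMod 2, a * 2 = 0 := by decide
  simp [h2]
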